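/- If A ∈ sp(4,ℂ) satisfies A² = 0 and the kernel of A has dimension 3 (equivalently A ≠ 0 has rank 1), then there exists B ∈ Sp(4,ℂ) such that B⁻¹AB = E₁₃, where E₁₃ is the 4×4 matrix whose (1,3) entry is 1 and all other entries are 0. -/

import Mathlib

open Matrix

/-- The 4×4 standard symplectic matrix `J = [[0, I], [-I, 0]]`. -/
noncomputable def J4 : Matrix (Fin 4) (Fin 4) ℂ :=
  !![0, 0, 1, 0;
     0, 0, 0, 1;
     -1, 0, 0, 0;
     0, -1, 0, 0]


lemma J4_mul_J4 : J4 * J4 = -1 := by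
  ext i j
  fin_cases i <;> fin_cases j <;>
    simp [J4, Matrix.mul_apply, Fin.sum_univ_four, Matrix.one_apply, Matrix.vecHead, Matrix.vecTail]

lemma J4_transpose : J4ᵀ = -J4 := by
  ext i j
  fin_cases i <;> fin_cases j <;> simp [J4, Matrix.vecHead, Matrix.vecTail]

lemma J4_det : J4.det = 1 := by
  simp +decide [J4, Matrix.det_succ_row_zero, Fin.sum_univ_succ, Fin.succAbove, Matrix.vecHead, Matrix.vecTail]

lemma mul_vecMulVec (M : Matrix (Fin 4) (Fin 4) ℂ) (u v : Fin 4 → ℂ) :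
    M * vecMulVec u v = vecMulVec (M *ᵥ u) v := by
  ext i j
  simp only [Matrix.mul_apply, vecMulVec_apply, mulVec, dotProduct, Finset.sum_mul]
  exact Finset.sum_congr rfl fun k _ => by ring

lemma vecMulVec_mul (M : Matrix (Fin 4) (Fin 4) ℂ) (u v : Fin 4 → ℂ) :
    vecMulVec u v * M = vecMulVec u (v ᵥ* M) := by
  ext i j
  simp only [Matrix.mul_apply, vecMulVec_apply, vecMul, dotProduct, Finset.mul_sum]
  exact Finset.sum_congr rfl fun k _ => by ring

lemma vecMulVec_neg (u v : Fin 4 → ℂ) : vecMulVec u (-v) = -vecMulVec u v := by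
  ext i j; simp [vecMulVec_apply]

lemma J4_mul_E13 :
    J4 * !![0, 0, 1, 0; 0, 0, 0, 0; 0, 0, 0, 0; 0, 0, 0, 0] =
      -vecMulVec (Pi.single 2 1) (Pi.single 2 1 : Fin 4 → ℂ) := by
  ext i j
  fin_cases i <;> fin_cases j <;>
    simp [J4, Matrix.mul_apply, Fin.sum_univ_four, vecMulVec_apply, Pi.single_apply,
      Matrix.vecHead, Matrix.vecTail]

lemma key_lemma (u : Fin 4 → ℂ) (C : Matrix (Fin 4) (Fin 4) ℂ)
    (hC : Cᵀ * J4 * C = J4) (hcol : C *ᵥ Pi.single 2 1 = u) :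
    ∃ B : Matrix (Fin 4) (Fin 4) ℂ, Bᵀ * J4 * B = J4 ∧
      B⁻¹ * (J4 * vecMulVec u u) * B =
        !![0, 0, 1, 0; 0, 0, 0, 0; 0, 0, 0, 0; 0, 0, 0, 0] := by
  refine ⟨-(J4 * C * J4), ?_, ?_⟩
  · -- symplectic
    have ht : (-(J4 * C * J4))ᵀ = -(J4 * Cᵀ * J4) := by
      simp [Matrix.transpose_mul, J4_transpose, Matrix.mul_assoc]
    rw [ht]
    simp only [Matrix.neg_mul, Matrix.mul_neg, neg_neg]
    calc J4 * Cᵀ * J4 * J4 * (J4 * C * J4)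
        = J4 * Cᵀ * (J4 * J4 * J4) * C * J4 := by
          simp only [Matrix.mul_assoc]
      _ = -(J4 * (Cᵀ * J4 * C) * J4) := by
          rw [J4_mul_J4]
          simp only [Matrix.neg_mul, Matrix.mul_neg, Matrix.one_mul, Matrix.mul_assoc]
      _ = J4 := by
          rw [hC, J4_mul_J4]; simp
  · -- conjugation
    have hdetC : C.det ^ 2 = 1 := by
      have := congrArg Matrix.det hC
      simpa [Matrix.det_mul, J4_det, Matrix.det_transpose, sq, mul_comm, mul_assoc] using this
    have hdetB : (-(J4 * C * J4)).det ≠ 0 := by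
      have h4 : ((-1 : ℂ)) ^ (4 : ℕ) = 1 := by norm_num
      rw [Matrix.det_neg]
      simp only [Matrix.det_mul, J4_det, Fintype.card_fin, h4]
      intro h
      rw [show (1 : ℂ) * (1 * C.det * 1) = C.det by ring] at h
      rw [h] at hdetC; simp at hdetC
    have h1 : Cᵀ * (J4 * C * J4) = -1 := by
      rw [← Matrix.mul_assoc, ← Matrix.mul_assoc, hC, J4_mul_J4]
    have hvm : u ᵥ* (J4 * C * J4) = -(Pi.single 2 1 : Fin 4 → ℂ) := by
      rw [← hcol, ← Matrix.vecMul_transpose, Matrix.vecMul_vecMul, h1]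
      funext j
      simp [Matrix.neg_apply, Matrix.one_apply, Pi.single_apply, eq_comm]
    have h5 : -(J4 * C * J4) * !![0, 0, 1, 0; 0, 0, 0, 0; 0, 0, 0, 0; 0, 0, 0, 0]
        = J4 * vecMulVec u (Pi.single 2 1) := by
      rw [Matrix.neg_mul, Matrix.mul_assoc, Matrix.mul_assoc, J4_mul_E13,
        Matrix.mul_neg, Matrix.mul_neg, neg_neg, mul_vecMulVec, hcol]
    have hAB : (J4 * vecMulVec u u) * -(J4 * C * J4) = -(J4 * C * J4) *
        !![0, 0, 1, 0; 0, 0, 0, 0; 0, 0, 0, 0; 0, 0, 0, 0] := by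
      rw [h5]
      calc (J4 * vecMulVec u u) * -(J4 * C * J4)
          = -(J4 * (vecMulVec u u * (J4 * C * J4))) := by
            simp [Matrix.mul_assoc, Matrix.mul_neg]
        _ = -(J4 * vecMulVec u (-(Pi.single 2 1))) := by rw [vecMulVec_mul, hvm]
        _ = J4 * vecMulVec u (Pi.single 2 1) := by rw [vecMulVec_neg]; simp
    rw [Matrix.mul_assoc, hAB, ← Matrix.mul_assoc,
      Matrix.nonsing_inv_mul _ (isUnit_iff_ne_zero.mpr hdetB), Matrix.one_mul]

set_option maxHeartbeats 1000000 in
lemma case2 (u : Fin 4 → ℂ) (h : u 2 ≠ 0) :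
    ∃ C : Matrix (Fin 4) (Fin 4) ℂ, Cᵀ * J4 * C = J4 ∧ C *ᵥ Pi.single 2 1 = u := by
  refine ⟨!![1/u 2, -u 3/u 2, u 0, u 1/u 2;
             0, 1, u 1, 0;
             0, 0, u 2, 0;
             0, 0, u 3, 1], ?_, ?_⟩
  · ext i j
    fin_cases i <;> fin_cases j <;>
      (try simp [J4, Matrix.mul_apply, Matrix.transpose_apply, Fin.sum_univ_four,
        Matrix.vecHead, Matrix.vecTail])
    all_goals (try field_simp)
    all_goals ring
  · funext i
    fin_cases i <;> simp [Matrix.mulVec_single, Matrix.vecHead, Matrix.vecTail]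

set_option maxHeartbeats 1000000 in
lemma case0 (u : Fin 4 → ℂ) (h : u 0 ≠ 0) :
    ∃ C : Matrix (Fin 4) (Fin 4) ℂ, Cᵀ * J4 * C = J4 ∧ C *ᵥ Pi.single 2 1 = u := by
  refine ⟨!![0, 0, u 0, 0;
             0, 1, u 1, 0;
             -1/u 0, u 3/u 0, u 2, -u 1/u 0;
             0, 0, u 3, 1], ?_, ?_⟩
  · ext i j
    fin_cases i <;> fin_cases j <;>
      (try simp [J4, Matrix.mul_apply, Matrix.transpose_apply, Fin.sum_univ_four,
        Matrix.vecHead, Matrix.vecTail])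
    all_goals (try field_simp)
    all_goals ring
  · funext i
    fin_cases i <;> simp [Matrix.mulVec_single, Matrix.vecHead, Matrix.vecTail]

set_option maxHeartbeats 1000000 in
lemma case3 (u : Fin 4 → ℂ) (h : u 3 ≠ 0) :
    ∃ C : Matrix (Fin 4) (Fin 4) ℂ, Cᵀ * J4 * C = J4 ∧ C *ᵥ Pi.single 2 1 = u := by
  refine ⟨!![0, 1, u 0, 0;
             1/u 3, -u 2/u 3, u 1, u 0/u 3;
             0, 0, u 2, 1;
             0, 0, u 3, 0], ?_, ?_⟩
  · ext i j
    fin_cases i <;> fin_cases j <;>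
      (try simp [J4, Matrix.mul_apply, Matrix.transpose_apply, Fin.sum_univ_four,
        Matrix.vecHead, Matrix.vecTail])
    all_goals (try field_simp)
    all_goals ring
  · funext i
    fin_cases i <;> simp [Matrix.mulVec_single, Matrix.vecHead, Matrix.vecTail]

set_option maxHeartbeats 1000000 in
lemma case1 (u : Fin 4 → ℂ) (h : u 1 ≠ 0) :
    ∃ C : Matrix (Fin 4) (Fin 4) ℂ, Cᵀ * J4 * C = J4 ∧ C *ᵥ Pi.single 2 1 = u := by
  refine ⟨!![0, 1, u 0, 0;
             0, 0, u 1, 0;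
             0, 0, u 2, 1;
             -1/u 1, u 2/u 1, u 3, -u 0/u 1], ?_, ?_⟩
  · ext i j
    fin_cases i <;> fin_cases j <;>
      (try simp [J4, Matrix.mul_apply, Matrix.transpose_apply, Fin.sum_univ_four,
        Matrix.vecHead, Matrix.vecTail])
    all_goals (try field_simp)
    all_goals ring
  · funext i
    fin_cases i <;> simp [Matrix.mulVec_single, Matrix.vecHead, Matrix.vecTail]

/-- If `A ∈ sp(4,ℂ)` satisfies `A² = 0` and `ker A` has dimension `3`, then `A` is
symplectically conjugated to the elementary matrix `E₁₃`. -/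
theorem sp4_nilpotent_ker_dim_three_canonical_form
    (A : Matrix (Fin 4) (Fin 4) ℂ)
    (hsp : Aᵀ * J4 + J4 * A = 0)
    (hA2 : A ^ 2 = 0)
    (hker : Module.finrank ℂ (LinearMap.ker A.mulVecLin) = 3) :
    ∃ B : Matrix (Fin 4) (Fin 4) ℂ,
      Bᵀ * J4 * B = J4 ∧
      B⁻¹ * A * B = !![0, 0, 1, 0;
                       0, 0, 0, 0;
                       0, 0, 0, 0;
                       0, 0, 0, 0] := by

  have hA0 : A ≠ 0 := by
    rintro rfl
    rw [Matrix.mulVecLin_zero, LinearMap.ker_zero] at hker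
    rw [finrank_top, Module.finrank_fin_fun] at hker
    norm_num at hker
  have hrange : Module.finrank ℂ (LinearMap.range A.mulVecLin) = 1 := by
    have h := LinearMap.finrank_range_add_finrank_ker A.mulVecLin
    rw [hker, Module.finrank_fin_fun] at h
    omega
  obtain ⟨v, hv0, hv⟩ := finrank_eq_one_iff'.mp hrange
  set c : Fin 4 → ℂ := (v : Fin 4 → ℂ) with hc
  have hr : ∀ j : Fin 4, ∃ t : ℂ, ∀ i, A i j = t * c i := by
    intro j
    obtain ⟨t, ht⟩ := hv ⟨A *ᵥ Pi.single j 1,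
      ⟨Pi.single j 1, by simp [Matrix.mulVecLin_apply]⟩⟩
    refine ⟨t, fun i => ?_⟩
    have h2 := congrArg (fun z : LinearMap.range A.mulVecLin => (z : Fin 4 → ℂ) i) ht
    simpa [Matrix.mulVec_single] using h2.symm
  choose r hA1 using hr
  have hc0 : c ≠ 0 := fun h => hv0 (ZeroMemClass.coe_eq_zero.mp h)
  set c' : Fin 4 → ℂ := J4 *ᵥ c with hc'
  have hc'0 : c' ≠ 0 := by
    intro h
    apply hc0
    have h2 : J4 *ᵥ (J4 *ᵥ c) = -c := by
      rw [Matrix.mulVec_mulVec, J4_mul_J4, Matrix.neg_mulVec, Matrix.one_mulVec]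
    rw [← hc', h, Matrix.mulVec_zero] at h2
    exact neg_eq_zero.mp h2.symm
  have hJA : ∀ i j, (J4 * A) i j = c' i * r j := by
    intro i j
    simp only [Matrix.mul_apply, hA1, hc', Matrix.mulVec, dotProduct, Finset.sum_mul]
    exact Finset.sum_congr rfl fun k _ => by ring
  have hsymmM : (J4 * A)ᵀ = J4 * A := by
    rw [Matrix.transpose_mul, J4_transpose]
    have h3 : Aᵀ * J4 = -(J4 * A) := eq_neg_of_add_eq_zero_left hsp
    rw [Matrix.mul_neg, h3, neg_neg]
  have hsym : ∀ i j, c' j * r i = c' i * r j := by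
    intro i j
    have h4 := congrFun (congrFun hsymmM i) j
    rw [Matrix.transpose_apply, hJA j i, hJA i j] at h4
    exact h4
  obtain ⟨i₀, hi₀⟩ := Function.ne_iff.mp hc'0
  simp only [Pi.zero_apply] at hi₀
  obtain ⟨j₀, hj₀⟩ : ∃ j, r j ≠ 0 := by
    by_contra h
    push_neg at h
    apply hA0
    ext i j
    rw [hA1 j i, h j]
    simp
  set t : ℂ := r i₀ / c' i₀ with htdef
  have hrt : ∀ j, r j = t * c' j := by
    intro j
    have h4 := hsym j i₀
    rw [htdef]
    field_simp
    linear_combination h4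
  have ht0 : t ≠ 0 := by
    intro h
    rw [hrt j₀, h] at hj₀
    simp at hj₀
  obtain ⟨s, hs⟩ := IsAlgClosed.exists_pow_nat_eq (k := ℂ) t (n := 2) (by norm_num)
  have hs0 : s ≠ 0 := by
    intro h
    rw [h] at hs
    simp at hs
    exact ht0 hs.symm
  set u : Fin 4 → ℂ := fun i => (Complex.I * s) * c' i with hu
  have hAu : A = J4 * vecMulVec u u := by
    have h6 : s * s = t := by rw [← sq]; exact hs
    have h7 := Complex.I_mul_I
    have h5 : J4 * A = -(vecMulVec u u) := by
      ext i j
      rw [hJA i j, hrt j]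
      simp only [Matrix.neg_apply, vecMulVec_apply, hu]
      linear_combination (s * s * c' i * c' j) * h7 + (-(c' i * c' j)) * h6
    have h8 : J4 * (J4 * A) = -A := by
      rw [← Matrix.mul_assoc, J4_mul_J4]; simp
    rw [h5, Matrix.mul_neg] at h8
    exact (neg_inj.mp h8).symm
  have hu0 : ∃ k, u k ≠ 0 :=
    ⟨i₀, mul_ne_zero (mul_ne_zero Complex.I_ne_zero hs0) hi₀⟩
  obtain ⟨k, hk⟩ := hu0
  have main : ∃ C : Matrix (Fin 4) (Fin 4) ℂ,
      Cᵀ * J4 * C = J4 ∧ C *ᵥ Pi.single 2 1 = u := by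
    fin_cases k
    · exact case0 u hk
    · exact case1 u hk
    · exact case2 u hk
    · exact case3 u hk
  obtain ⟨C, hC, hcol⟩ := main
  obtain ⟨B, hB1, hB2⟩ := key_lemma u C hC hcol
  exact ⟨B, hB1, by rw [hAu]; exact hB2⟩
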